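/- In the Bernoulli-Gaussian posterior setting, the diagonal of the posterior covariance of h equals (τ−1)·diag(ĥ ĥ^H) + (1/τ)·Σ Γ (Σ + Γ)^{-1}, where ĥ = Γ(Σ+Γ)^{-1}μ/τ is the posterior mean and τ as defined from the prior activity λ. -/

import Mathlib

open MeasureTheory Finset

/-- Circularly symmetric complex Gaussian density on `ℂ^N` with diagonal
covariance `diag d` and mean `m`. -/
noncomputable def cnDiag (N : ℕ) (d : Fin N → ℝ) (m : Fin N → ℂ) (h : Fin N → ℂ) : ℝ :=
  (Real.pi ^ N * ∏ n, d n)⁻¹ * Real.exp (-(∑ n, ‖h n - m n‖ ^ 2 / d n))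

section BGaux
open Real Filter

lemma integrable_sq_exp {b : ℝ} (hb : 0 < b) :
    Integrable (fun x : ℝ => x ^ 2 * Real.exp (-b * x ^ 2)) := by
  have := integrable_rpow_mul_exp_neg_mul_sq hb (s := 2) (by norm_num)
  simpa [Real.rpow_two] using this

lemma integral_sq_exp {b : ℝ} (hb : 0 < b) :
    ∫ x : ℝ, x ^ 2 * Real.exp (-b * x ^ 2) = Real.sqrt (π / b) / (2 * b) := by
  set f' : ℝ → ℝ := fun x => x ^ 2 * Real.exp (-b * x ^ 2) - (1 / (2 * b)) * Real.exp (-b * x ^ 2) with hf'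
  set f : ℝ → ℝ := fun x => -(1 / (2 * b)) * (x * Real.exp (-b * x ^ 2)) with hf
  have hderiv : ∀ x : ℝ, HasDerivAt f (f' x) x := by
    intro x
    have h1 : HasDerivAt (fun x : ℝ => -b * x ^ 2) (-b * (2 * x)) x := by
      simpa using ((hasDerivAt_pow 2 x).const_mul (-b))
    have h2 := h1.exp
    have h3 : HasDerivAt (fun x : ℝ => x * Real.exp (-b * x ^ 2))
        (1 * Real.exp (-b * x ^ 2) + x * (Real.exp (-b * x ^ 2) * (-b * (2 * x)))) x :=
      (hasDerivAt_id x).mul h2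
    have h4 := h3.const_mul (-(1 / (2 * b)))
    refine h4.congr_deriv ?_
    show _ = x ^ 2 * Real.exp (-b * x ^ 2) - 1 / (2 * b) * Real.exp (-b * x ^ 2)
    field_simp
    ring
  have hint : IntegrableOn f' (Set.Ioi 0) :=
    ((integrable_sq_exp hb).sub ((integrable_exp_neg_mul_sq hb).const_mul _)).integrableOn
  have htend : Tendsto f atTop (nhds 0) := by
    have h0 : Tendsto (fun x : ℝ => Real.exp (-(1 / 2) * x)) atTop (nhds 0) := by
      have h : Tendsto (fun x : ℝ => -(1/2) * x) atTop atBot :=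
        Tendsto.const_mul_atTop_of_neg (by norm_num) tendsto_id
      exact Real.tendsto_exp_atBot.comp h
    have hlo := (rpow_mul_exp_neg_mul_sq_isLittleO_exp_neg hb 1).tendsto_zero_of_tendsto h0
    have : Tendsto (fun x : ℝ => x * Real.exp (-b * x ^ 2)) atTop (nhds 0) := by
      apply hlo.congr'
      filter_upwards [eventually_ge_atTop (0:ℝ)] with x hx
      rw [Real.rpow_one]
    simpa [hf] using (this.const_mul (-(1 / (2 * b))))
  have hIoi : ∫ x in Set.Ioi (0:ℝ), f' x = 0 - f 0 := by
    refine integral_Ioi_of_hasDerivAt_of_tendsto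
      (hderiv 0).continuousAt.continuousWithinAt (fun x _ => hderiv x) hint htend
  have hf0 : f 0 = 0 := by simp [hf]
  rw [hf0, sub_zero] at hIoi
  -- split the Ioi integral
  have hsplit : ∫ x in Set.Ioi (0:ℝ), x ^ 2 * Real.exp (-b * x ^ 2)
      = (1 / (2 * b)) * ∫ x in Set.Ioi (0:ℝ), Real.exp (-b * x ^ 2) := by
    have hsub := integral_sub
      ((integrable_sq_exp hb).integrableOn (s := Set.Ioi (0:ℝ)))
      (((integrable_exp_neg_mul_sq hb).const_mul (1 / (2 * b))).integrableOn
        (s := Set.Ioi (0:ℝ)))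
    rw [hf'] at hIoi
    have h2 : (∫ x in Set.Ioi (0:ℝ), x ^ 2 * Real.exp (-b * x ^ 2))
        - ∫ x in Set.Ioi (0:ℝ), (1 / (2 * b)) * Real.exp (-b * x ^ 2) = 0 := by
      rw [← hsub]; exact hIoi
    have := sub_eq_zero.mp h2
    rw [this, integral_const_mul]
  -- even function: full line = 2 * Ioi
  have hev1 : ∫ x : ℝ, x ^ 2 * Real.exp (-b * x ^ 2)
      = 2 * ∫ x in Set.Ioi (0:ℝ), x ^ 2 * Real.exp (-b * x ^ 2) := by
    rw [← integral_comp_abs (f := fun x => x ^ 2 * Real.exp (-b * x ^ 2))]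
    congr 1; ext x; rw [sq_abs]
  have hev2 : ∫ x : ℝ, Real.exp (-b * x ^ 2)
      = 2 * ∫ x in Set.Ioi (0:ℝ), Real.exp (-b * x ^ 2) := by
    rw [← integral_comp_abs (f := fun x => Real.exp (-b * x ^ 2))]
    congr 1; ext x; rw [sq_abs]
  have := integral_gaussian b
  rw [hev1, hsplit, ← mul_assoc, mul_comm (2:ℝ) (1 / (2*b)), mul_assoc, ← hev2, this]
  ring

lemma integral_x_exp {b : ℝ} (hb : 0 < b) : ∫ x : ℝ, x * Real.exp (-b * x ^ 2) = 0 := by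
  have h := MeasureTheory.integral_neg_eq_self (fun x : ℝ => x * Real.exp (-b * x ^ 2)) volume
  simp only [neg_sq, neg_mul] at h
  rw [integral_neg] at h
  simp only [neg_mul]
  linarith

lemma integrable_shift {d : ℝ} (a : ℝ) {F : ℝ → ℝ} (hF : Integrable F) :
    Integrable (fun x : ℝ => F (x - a)) := by
  simpa [sub_eq_add_neg] using hF.comp_add_right (-a)

lemma exp_arg_eq {d : ℝ} (y : ℝ) : -(y ^ 2 / d) = -d⁻¹ * y ^ 2 := by ring

lemma integral_phi {d : ℝ} (hd : 0 < d) (a : ℝ) :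
    ∫ x : ℝ, Real.exp (-((x - a) ^ 2 / d)) = Real.sqrt (Real.pi * d) := by
  have h := MeasureTheory.integral_sub_right_eq_self
    (μ := volume) (fun y : ℝ => Real.exp (-(y ^ 2 / d))) a
  have h2 : ∫ x : ℝ, Real.exp (-(x ^ 2 / d)) = Real.sqrt (Real.pi * d) := by
    have e1 : (∫ x : ℝ, Real.exp (-(x ^ 2 / d))) = ∫ x : ℝ, Real.exp (-d⁻¹ * x ^ 2) := by
      congr 1; ext x; rw [exp_arg_eq]
    rw [e1, integral_gaussian, division_def, inv_inv]
  exact h.trans h2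

lemma hd_inv_pos {d : ℝ} (hd : 0 < d) : 0 < d⁻¹ := inv_pos.mpr hd

lemma integrable_phi {d : ℝ} (hd : 0 < d) (a : ℝ) :
    Integrable (fun x : ℝ => Real.exp (-((x - a) ^ 2 / d))) := by
  refine integrable_shift (d := d) (F := fun y : ℝ => Real.exp (-(y ^ 2 / d))) a ?_
  have := integrable_exp_neg_mul_sq (hd_inv_pos hd)
  apply this.congr
  filter_upwards with x
  rw [exp_arg_eq]

lemma integrable_F {d : ℝ} (hd : 0 < d) (a : ℝ) :
    Integrable (fun y : ℝ => Real.exp (-(y ^ 2 / d)) * (y + a) ^ 2) := by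
  have hb := hd_inv_pos hd
  have h1 := integrable_sq_exp hb
  have h2 := (integrable_mul_exp_neg_mul_sq hb).const_mul (2 * a)
  have h3 := (integrable_exp_neg_mul_sq hb).const_mul (a ^ 2)
  apply ((h1.add h2).add h3).congr
  filter_upwards with y
  simp only [Pi.add_apply]
  rw [exp_arg_eq (d := d)]
  ring

lemma integral_phi_sq {d : ℝ} (hd : 0 < d) (a : ℝ) :
    ∫ x : ℝ, Real.exp (-((x - a) ^ 2 / d)) * x ^ 2
      = Real.sqrt (Real.pi * d) * (a ^ 2 + d / 2) := by
  have hb := hd_inv_pos hd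
  have e0 : (fun x : ℝ => Real.exp (-((x - a) ^ 2 / d)) * x ^ 2)
      = fun x : ℝ => (fun y : ℝ => Real.exp (-(y ^ 2 / d)) * (y + a) ^ 2) (x - a) := by
    ext x; simp [sub_add_cancel]
  rw [e0, MeasureTheory.integral_sub_right_eq_self
    (μ := volume) (fun y : ℝ => Real.exp (-(y ^ 2 / d)) * (y + a) ^ 2) a]
  have e1 : (fun y : ℝ => Real.exp (-(y ^ 2 / d)) * (y + a) ^ 2)
      = fun y : ℝ => (y ^ 2 * Real.exp (-d⁻¹ * y ^ 2)
          + (2 * a) * (y * Real.exp (-d⁻¹ * y ^ 2)))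
          + a ^ 2 * Real.exp (-d⁻¹ * y ^ 2) := by
    ext y; rw [exp_arg_eq (d := d)]; ring
  have h1 := integrable_sq_exp hb
  have h2 := (integrable_mul_exp_neg_mul_sq hb).const_mul (2 * a)
  have h3 := (integrable_exp_neg_mul_sq hb).const_mul (a ^ 2)
  have h12 : Integrable (fun y : ℝ => y ^ 2 * Real.exp (-d⁻¹ * y ^ 2)
      + 2 * a * (y * Real.exp (-d⁻¹ * y ^ 2))) := h1.add h2
  rw [e1, integral_add h12 h3, integral_add h1 h2, integral_const_mul, integral_const_mul, integral_x_exp hb,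
    integral_sq_exp hb, integral_gaussian]
  have hπ : Real.pi / d⁻¹ = Real.pi * d := by field_simp
  rw [hπ, mul_zero, add_zero]
  field_simp
  ring

lemma integrable_phi_sq {d : ℝ} (hd : 0 < d) (a : ℝ) :
    Integrable (fun x : ℝ => Real.exp (-((x - a) ^ 2 / d)) * x ^ 2) := by
  have h := integrable_shift (d := d)
    (F := fun y : ℝ => Real.exp (-(y ^ 2 / d)) * (y + a) ^ 2) a (integrable_F hd a)
  apply h.congr
  filter_upwards with x
  simp [sub_add_cancel]

lemma integral_c (F : ℂ → ℝ) :
    ∫ z : ℂ, F z = ∫ p : ℝ × ℝ, F ⟨p.1, p.2⟩ :=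
  ((Complex.volume_preserving_equiv_real_prod.symm _).integral_comp' F).symm

lemma abs_mk_sub (p : ℝ × ℝ) (m : ℂ) :
    ‖(⟨p.1, p.2⟩ : ℂ) - m‖ ^ 2 = (p.1 - m.re) ^ 2 + (p.2 - m.im) ^ 2 := by
  rw [Complex.sq_norm, Complex.normSq_apply]
  simp only [Complex.sub_re, Complex.sub_im]
  ring

lemma c1 {d : ℝ} (hd : 0 < d) (m : ℂ) :
    ∫ z : ℂ, Real.exp (-(‖z - m‖ ^ 2 / d)) = Real.pi * d := by
  rw [integral_c (fun z => Real.exp (-(‖z - m‖ ^ 2 / d)))]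
  have he : (fun p : ℝ × ℝ => Real.exp (-(‖(⟨p.1, p.2⟩ : ℂ) - m‖ ^ 2 / d)))
      = fun p : ℝ × ℝ =>
        Real.exp (-((p.1 - m.re) ^ 2 / d)) * Real.exp (-((p.2 - m.im) ^ 2 / d)) := by
    ext p
    rw [abs_mk_sub, ← Real.exp_add]
    congr 1
    ring
  rw [he, Measure.volume_eq_prod ℝ ℝ,
    integral_prod_mul (f := fun x : ℝ => Real.exp (-((x - m.re) ^ 2 / d)))
      (g := fun y : ℝ => Real.exp (-((y - m.im) ^ 2 / d))),
    integral_phi hd, integral_phi hd]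
  exact Real.mul_self_sqrt (by positivity)

lemma c2 {d : ℝ} (hd : 0 < d) (m : ℂ) :
    ∫ z : ℂ, Real.exp (-(‖z - m‖ ^ 2 / d)) * ‖z‖ ^ 2
      = Real.pi * d * (‖m‖ ^ 2 + d) := by
  rw [integral_c (fun z => Real.exp (-(‖z - m‖ ^ 2 / d)) * ‖z‖ ^ 2)]
  have he : (fun p : ℝ × ℝ =>
        Real.exp (-(‖(⟨p.1, p.2⟩ : ℂ) - m‖ ^ 2 / d))
          * ‖(⟨p.1, p.2⟩ : ℂ)‖ ^ 2)
      = fun p : ℝ × ℝ =>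
        (Real.exp (-((p.1 - m.re) ^ 2 / d)) * p.1 ^ 2) * Real.exp (-((p.2 - m.im) ^ 2 / d))
          + Real.exp (-((p.1 - m.re) ^ 2 / d))
            * (Real.exp (-((p.2 - m.im) ^ 2 / d)) * p.2 ^ 2) := by
    ext p
    have h0 : ‖(⟨p.1, p.2⟩ : ℂ)‖ ^ 2 = p.1 ^ 2 + p.2 ^ 2 := by
      simpa using abs_mk_sub p 0
    rw [abs_mk_sub, h0]
    rw [show -(((p.1 - m.re) ^ 2 + (p.2 - m.im) ^ 2) / d)
        = -((p.1 - m.re) ^ 2 / d) + -((p.2 - m.im) ^ 2 / d) by ring, Real.exp_add]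
    ring
  rw [he, Measure.volume_eq_prod ℝ ℝ]
  rw [integral_add ((integrable_phi_sq hd m.re).mul_prod (integrable_phi hd m.im))
    ((integrable_phi hd m.re).mul_prod (integrable_phi_sq hd m.im))]
  rw [integral_prod_mul (f := fun x : ℝ => Real.exp (-((x - m.re) ^ 2 / d)) * x ^ 2)
      (g := fun y : ℝ => Real.exp (-((y - m.im) ^ 2 / d))),
    integral_prod_mul (f := fun x : ℝ => Real.exp (-((x - m.re) ^ 2 / d)))
      (g := fun y : ℝ => Real.exp (-((y - m.im) ^ 2 / d)) * y ^ 2),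
    integral_phi hd, integral_phi hd, integral_phi_sq hd, integral_phi_sq hd]
  have habs : ‖m‖ ^ 2 = m.re ^ 2 + m.im ^ 2 := by
    rw [Complex.sq_norm, Complex.normSq_apply]; ring
  rw [habs]
  have hss : Real.sqrt (Real.pi * d) * Real.sqrt (Real.pi * d) = Real.pi * d :=
    Real.mul_self_sqrt (by positivity)
  linear_combination (m.re ^ 2 + m.im ^ 2 + d) * hss

noncomputable def oneG (d : ℝ) (m z : ℂ) : ℝ :=
  (Real.pi * d)⁻¹ * Real.exp (-(‖z - m‖ ^ 2 / d))

lemma oneG_int {d : ℝ} (hd : 0 < d) (m : ℂ) : ∫ z : ℂ, oneG d m z = 1 := by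
  unfold oneG
  rw [integral_const_mul, c1 hd m, inv_mul_cancel₀ (by positivity)]

lemma oneG_int_sq {d : ℝ} (hd : 0 < d) (m : ℂ) :
    ∫ z : ℂ, oneG d m z * ‖z‖ ^ 2 = ‖m‖ ^ 2 + d := by
  unfold oneG
  simp only [mul_assoc]
  rw [integral_const_mul, c2 hd m, ← mul_assoc, inv_mul_cancel₀ (by positivity), one_mul]

lemma oneG_pair {s g : ℝ} (hs : 0 < s) (hg : 0 < g) (μ z : ℂ) :
    oneG s μ z * oneG g 0 z
      = ((Real.pi * (s + g))⁻¹ * Real.exp (-(‖μ‖ ^ 2 / (s + g))))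
        * oneG (s * g / (s + g)) (((g / (s + g) : ℝ) : ℂ) * μ) z := by
  unfold oneG
  have hsg : 0 < s + g := by linarith
  have hcoef : (Real.pi * s)⁻¹ * (Real.pi * g)⁻¹
      = (Real.pi * (s + g))⁻¹ * (Real.pi * (s * g / (s + g)))⁻¹ := by
    rw [← mul_inv, ← mul_inv]
    congr 1
    field_simp
  have hexp : ‖z - μ‖ ^ 2 / s + ‖z - 0‖ ^ 2 / g
      = ‖μ‖ ^ 2 / (s + g)
        + ‖z - ((g / (s + g) : ℝ) : ℂ) * μ‖ ^ 2 / (s * g / (s + g)) := by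
    have ha1 : ‖z - μ‖ ^ 2
        = Complex.normSq z + Complex.normSq μ - 2 * (z * (starRingEnd ℂ) μ).re := by
      rw [Complex.sq_norm, Complex.normSq_sub]
    have ha2 : ‖z - 0‖ ^ 2 = Complex.normSq z := by
      rw [sub_zero, Complex.sq_norm]
    have ha3 : ‖μ‖ ^ 2 = Complex.normSq μ := Complex.sq_norm μ
    have ha4 : ‖z - ((g / (s + g) : ℝ) : ℂ) * μ‖ ^ 2
        = Complex.normSq z + (g / (s + g)) ^ 2 * Complex.normSq μ
          - 2 * ((g / (s + g)) * (z * (starRingEnd ℂ) μ).re) := by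
      rw [Complex.sq_norm, Complex.normSq_sub]
      congr 2
      · rw [map_mul, Complex.normSq_ofReal]; ring
      · rw [map_mul, Complex.conj_ofReal, mul_left_comm, Complex.re_ofReal_mul]
    rw [ha1, ha2, ha3, ha4]
    field_simp
    ring
  rw [mul_mul_mul_comm, mul_mul_mul_comm ((Real.pi * (s + g))⁻¹), ← Real.exp_add,
    ← Real.exp_add, hcoef]
  congr 1
  rw [Real.exp_eq_exp]
  linarith [hexp]

lemma cnDiag_prod (N : ℕ) (d : Fin N → ℝ) (m : Fin N → ℂ) (h : Fin N → ℂ) :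
    cnDiag N d m h = ∏ n, oneG (d n) (m n) (h n) := by
  unfold cnDiag oneG
  rw [Finset.prod_mul_distrib, ← Real.exp_sum]
  congr 1
  · rw [Finset.prod_inv_distrib, Finset.prod_mul_distrib, Finset.prod_const]
    simp
  · congr 1
    rw [← Finset.sum_neg_distrib]



noncomputable def bgK (sk gk : ℝ) (μk : ℂ) : ℝ :=
  (Real.pi * (sk + gk))⁻¹ * Real.exp (-(‖μk‖ ^ 2 / (sk + gk)))

noncomputable def bgV (sk gk : ℝ) : ℝ := sk * gk / (sk + gk)

noncomputable def bgM (sk gk : ℝ) (μk : ℂ) : ℂ := ((gk / (sk + gk) : ℝ) : ℂ) * μk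

lemma oneG_pair' {s g : ℝ} (hs : 0 < s) (hg : 0 < g) (μ z : ℂ) :
    oneG s μ z * oneG g 0 z = bgK s g μ * oneG (bgV s g) (bgM s g μ) z :=
  oneG_pair hs hg μ z

lemma bgK_pos {s g : ℝ} (hs : 0 < s) (hg : 0 < g) (μ : ℂ) : 0 < bgK s g μ :=
  mul_pos (inv_pos.mpr (mul_pos Real.pi_pos (by linarith))) (Real.exp_pos _)

lemma bgV_pos {s g : ℝ} (hs : 0 < s) (hg : 0 < g) : 0 < bgV s g :=
  div_pos (mul_pos hs hg) (by linarith)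

lemma pi_int (N : ℕ) (K v : Fin N → ℝ) (mm : Fin N → ℂ) (hv : ∀ k, 0 < v k) :
    ∫ h : Fin N → ℂ, ∏ k, (K k * oneG (v k) (mm k) (h k)) = ∏ k, K k := by
  rw [integral_fintype_prod_volume_eq_prod (ι := Fin N) (fun k z => K k * oneG (v k) (mm k) z)]
  exact Finset.prod_congr rfl fun k _ => by
    rw [integral_const_mul, oneG_int (hv k), mul_one]

lemma pi_int_sq (N : ℕ) (K v : Fin N → ℝ) (mm : Fin N → ℂ) (hv : ∀ k, 0 < v k) (n : Fin N) :
    ∫ h : Fin N → ℂ, (∏ k, (K k * oneG (v k) (mm k) (h k))) * ‖h n‖ ^ 2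
      = (∏ k, K k) * (‖mm n‖ ^ 2 + v n) := by
  have hpt : ∀ h : Fin N → ℂ,
      (∏ k, (K k * oneG (v k) (mm k) (h k))) * ‖h n‖ ^ 2
      = ∏ k, ((K k * oneG (v k) (mm k) (h k))
          * (if k = n then ‖h k‖ ^ 2 else 1)) := by
    intro h
    conv_rhs => rw [Finset.prod_mul_distrib,
      Finset.prod_ite_eq' Finset.univ n (fun k => ‖h k‖ ^ 2)]
    simp
  have step1 : (∫ h : Fin N → ℂ,
        (∏ k, (K k * oneG (v k) (mm k) (h k))) * ‖h n‖ ^ 2)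
      = ∫ h : Fin N → ℂ, ∏ k, ((K k * oneG (v k) (mm k) (h k))
          * (if k = n then ‖h k‖ ^ 2 else 1)) := by
    congr 1; ext h; exact hpt h
  rw [step1, integral_fintype_prod_volume_eq_prod (ι := Fin N)
    (fun k z => (K k * oneG (v k) (mm k) z) * (if k = n then ‖z‖ ^ 2 else 1))]
  have hval : ∀ k, (∫ z : ℂ, (K k * oneG (v k) (mm k) z)
        * (if k = n then ‖z‖ ^ 2 else 1))
      = K k * (if k = n then ‖mm k‖ ^ 2 + v k else 1) := by
    intro k
    by_cases hk : k = n
    · subst hk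
      have he : (fun z : ℂ => (K k * oneG (v k) (mm k) z)
            * (if k = k then ‖z‖ ^ 2 else 1))
          = fun z => K k * (oneG (v k) (mm k) z * ‖z‖ ^ 2) := by
        ext z; simp [mul_assoc]
      rw [he, integral_const_mul, oneG_int_sq (hv k), if_pos rfl]
    · have he : (fun z : ℂ => (K k * oneG (v k) (mm k) z)
            * (if k = n then ‖z‖ ^ 2 else 1))
          = fun z => K k * oneG (v k) (mm k) z := by
        ext z; simp [hk]
      rw [he, integral_const_mul, oneG_int (hv k), mul_one, if_neg hk, mul_one]
  rw [Finset.prod_congr rfl fun k _ => hval k, Finset.prod_mul_distrib,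
    Finset.prod_ite_eq' Finset.univ n (fun k => ‖mm k‖ ^ 2 + v k)]
  simp

lemma bg_point (N : ℕ) (s g : Fin N → ℝ) (hs : ∀ n, 0 < s n) (hg : ∀ n, 0 < g n)
    (μv : Fin N → ℂ) (h : Fin N → ℂ) :
    cnDiag N s μv h * cnDiag N g 0 h
      = ∏ k, (bgK (s k) (g k) (μv k)
          * oneG (bgV (s k) (g k)) (bgM (s k) (g k) (μv k)) (h k)) := by
  rw [cnDiag_prod, cnDiag_prod, ← Finset.prod_mul_distrib]
  exact Finset.prod_congr rfl fun k _ => oneG_pair' (hs k) (hg k) _ _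

lemma bg_ZE (N : ℕ) (s g : Fin N → ℝ) (hs : ∀ n, 0 < s n) (hg : ∀ n, 0 < g n)
    (μv : Fin N → ℂ) :
    (∏ k, bgK (s k) (g k) (μv k)) * ((∏ k, (g k / s k + 1))
        * Real.exp (-(∑ k, ‖μv k‖ ^ 2 * (1 / s k - 1 / (s k + g k)))))
      = cnDiag N s μv 0 := by
  rw [cnDiag_prod]
  rw [show -(∑ k, ‖μv k‖ ^ 2 * (1 / s k - 1 / (s k + g k)))
      = ∑ k, -(‖μv k‖ ^ 2 * (1 / s k - 1 / (s k + g k))) by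
    rw [Finset.sum_neg_distrib]]
  rw [Real.exp_sum, ← Finset.prod_mul_distrib, ← Finset.prod_mul_distrib]
  refine Finset.prod_congr rfl fun k _ => ?_
  have hsk := hs k
  have hgk := hg k
  have hsgk : 0 < s k + g k := by linarith
  unfold bgK oneG
  have habs : ‖(0 : Fin N → ℂ) k - μv k‖ = ‖μv k‖ := by
    simp only [Pi.zero_apply, zero_sub, norm_neg]
  rw [habs]
  have c1 : (Real.pi * (s k + g k))⁻¹ * (g k / s k + 1) = (Real.pi * s k)⁻¹ := by
    field_simp
    ring
  have c2 : -(‖μv k‖ ^ 2 / (s k + g k))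
      + -(‖μv k‖ ^ 2 * (1 / s k - 1 / (s k + g k)))
      = -(‖μv k‖ ^ 2 / s k) := by
    field_simp
    ring
  calc (Real.pi * (s k + g k))⁻¹ * Real.exp (-(‖μv k‖ ^ 2 / (s k + g k)))
        * ((g k / s k + 1)
          * Real.exp (-(‖μv k‖ ^ 2 * (1 / s k - 1 / (s k + g k)))))
      = ((Real.pi * (s k + g k))⁻¹ * (g k / s k + 1))
        * (Real.exp (-(‖μv k‖ ^ 2 / (s k + g k)))
          * Real.exp (-(‖μv k‖ ^ 2 * (1 / s k - 1 / (s k + g k))))) := by ring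
    _ = (Real.pi * s k)⁻¹ * Real.exp (-(‖μv k‖ ^ 2 / s k)) := by
        rw [c1, ← Real.exp_add, c2]

end BGaux

/-- Diagonal of the Bernoulli-Gaussian posterior covariance:
`E[|h_n|²|obs] − |ĥ_n|² = (τ−1)|ĥ_n|² + (1/τ)·s_n g_n/(s_n+g_n)`, where
`ĥ = Γ(Σ+Γ)⁻¹μ/τ` is the posterior mean (diagonal case). -/
theorem bg_posterior_variance (N : ℕ) (s g : Fin N → ℝ)
    (hs : ∀ n, 0 < s n) (hg : ∀ n, 0 < g n)
    (lam : ℝ) (hlam0 : 0 < lam) (hlam1 : lam < 1) (μv : Fin N → ℂ)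
    (τ : ℝ)
    (hτ : τ = 1 + ((1 - lam) / lam) *
        Real.exp (-((∑ n, ‖μv n‖ ^ 2 * (1 / s n - 1 / (s n + g n)))
          - Real.log (∏ n, (g n / s n + 1)))))
    (C : ℝ)
    (hC : C = lam * (∫ h : Fin N → ℂ, cnDiag N s μv h * cnDiag N g 0 h)
        + (1 - lam) * cnDiag N s μv 0)
    (hhat : Fin N → ℂ)
    (hhat_def : ∀ n, hhat n = ((g n / (s n + g n) / τ : ℝ) : ℂ) * μv n) :
    ∀ n : Fin N,
      (lam / C) * (∫ h : Fin N → ℂ, cnDiag N s μv h * cnDiag N g 0 h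
          * ‖h n‖ ^ 2)
        - ‖hhat n‖ ^ 2
      = (τ - 1) * ‖hhat n‖ ^ 2 + (1 / τ) * (s n * g n / (s n + g n)) := by
  intro n
  have hsgn : 0 < s n + g n := by have := hs n; have := hg n; linarith
  have hvpos : ∀ k, 0 < bgV (s k) (g k) := fun k => bgV_pos (hs k) (hg k)
  have hZpos : 0 < ∏ k, bgK (s k) (g k) (μv k) :=
    Finset.prod_pos fun k _ => bgK_pos (hs k) (hg k) _
  have hτpos : 0 < τ := by
    rw [hτ]
    have h1 : 0 < (1 - lam) / lam := div_pos (by linarith) hlam0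
    have h2 := mul_pos h1 (Real.exp_pos
      (-((∑ k, ‖μv k‖ ^ 2 * (1 / s k - 1 / (s k + g k)))
        - Real.log (∏ k, (g k / s k + 1)))))
    linarith
  have I1 : (∫ h : Fin N → ℂ, cnDiag N s μv h * cnDiag N g 0 h)
      = ∏ k, bgK (s k) (g k) (μv k) := by
    have hp := pi_int N (fun k => bgK (s k) (g k) (μv k)) (fun k => bgV (s k) (g k))
      (fun k => bgM (s k) (g k) (μv k)) hvpos
    rw [← hp]
    congr 1
    ext h
    exact bg_point N s g hs hg μv h
  have I2 : (∫ h : Fin N → ℂ, cnDiag N s μv h * cnDiag N g 0 h * ‖h n‖ ^ 2)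
      = (∏ k, bgK (s k) (g k) (μv k))
        * (‖bgM (s n) (g n) (μv n)‖ ^ 2 + bgV (s n) (g n)) := by
    have hp := pi_int_sq N (fun k => bgK (s k) (g k) (μv k)) (fun k => bgV (s k) (g k))
      (fun k => bgM (s k) (g k) (μv k)) hvpos n
    rw [← hp]
    congr 1
    ext h
    rw [bg_point N s g hs hg μv h]
  have hCeq : C = lam * (∏ k, bgK (s k) (g k) (μv k)) * τ := by
    have hPpos : 0 < ∏ k, (g k / s k + 1) :=
      Finset.prod_pos fun k _ => by have := hs k; have := hg k; positivity
    have hE : Real.exp (-((∑ k, ‖μv k‖ ^ 2 * (1 / s k - 1 / (s k + g k)))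
          - Real.log (∏ k, (g k / s k + 1))))
        = (∏ k, (g k / s k + 1))
          * Real.exp (-(∑ k, ‖μv k‖ ^ 2 * (1 / s k - 1 / (s k + g k)))) := by
      rw [show -((∑ k, ‖μv k‖ ^ 2 * (1 / s k - 1 / (s k + g k)))
            - Real.log (∏ k, (g k / s k + 1)))
          = Real.log (∏ k, (g k / s k + 1))
            + -(∑ k, ‖μv k‖ ^ 2 * (1 / s k - 1 / (s k + g k))) from by ring,
        Real.exp_add, Real.exp_log hPpos]
    rw [hC, I1, hτ, hE, ← bg_ZE N s g hs hg μv]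
    field_simp
  rw [I2, hCeq]
  have hμabs : ‖bgM (s n) (g n) (μv n)‖
      = (g n / (s n + g n)) * ‖μv n‖ := by
    unfold bgM
    rw [norm_mul, Complex.norm_real, Real.norm_eq_abs,
      abs_of_nonneg (le_of_lt (div_pos (hg n) hsgn))]
  have hhabs : ‖hhat n‖ = (g n / (s n + g n) / τ) * ‖μv n‖ := by
    rw [hhat_def n, norm_mul, Complex.norm_real, Real.norm_eq_abs,
      abs_of_nonneg (div_nonneg (le_of_lt (div_pos (hg n) hsgn)) (le_of_lt hτpos))]
  rw [hμabs, hhabs]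
  unfold bgV
  have hτne : τ ≠ 0 := ne_of_gt hτpos
  have hZne : (∏ k, bgK (s k) (g k) (μv k)) ≠ 0 := ne_of_gt hZpos
  have hlamne : lam ≠ 0 := ne_of_gt hlam0
  have hsgne : s n + g n ≠ 0 := ne_of_gt hsgn
  field_simp
  ring
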